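/- arXiv:1302.4193 — 6 statements merged into one kernel-verified Lean document; each statement's English description precedes it below -/
import Mathlib

section
/- Let G be a group equipped with a topology τ such that multiplication (x,y) ↦ x·y is jointly continuous. Let τ₁ be the topology on G generated by the family of all Gδ-subsets of (G,τ) (i.e., all countable intersections of τ-open sets). Then multiplication is also jointly continuous with respect to τ₁, i.e., (G,τ₁) is again a paratopological group. -/
/-- If `(G, τ)` is a group with jointly continuous multiplication, then
multiplication is also jointly continuous with respect to the topology generated by the
family of all Gδ-subsets of `(G, τ)`; that is, `(G, τ₁)` is again a paratopological group. -/
theorem gdelta_topology_paratopological {G : Type*} [Group G] (τ : TopologicalSpace G)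
    (hmul : @ContinuousMul G τ _) :
    @ContinuousMul G (TopologicalSpace.generateFrom {s : Set G | @IsGδ G τ s}) _ := by
  letI := τ
  haveI := hmul
  refine @ContinuousMul.mk G (TopologicalSpace.generateFrom {s : Set G | @IsGδ G τ s}) _ ?_
  rw [continuous_generateFrom_iff]
  intro s hs
  simp only [Set.mem_setOf_eq] at hs
  obtain ⟨f, hfo, rfl⟩ := isGδ_iff_eq_iInter_nat.1 hs
  rw [@isOpen_prod_iff G G (TopologicalSpace.generateFrom {s : Set G | @IsGδ G τ s})
    (TopologicalSpace.generateFrom {s : Set G | @IsGδ G τ s})]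
  rintro a b hab
  have key : ∀ n : ℕ, ∃ u v : Set G, IsOpen u ∧ IsOpen v ∧ a ∈ u ∧ b ∈ v ∧
      u ×ˢ v ⊆ (fun p : G × G => p.1 * p.2) ⁻¹' f n := by
    intro n
    have hopen : IsOpen ((fun p : G × G => p.1 * p.2) ⁻¹' f n) :=
      (continuous_mul (M := G)).isOpen_preimage _ (hfo n)
    have hmem : (a, b) ∈ (fun p : G × G => p.1 * p.2) ⁻¹' f n := by
      have := hab
      simp only [Set.mem_preimage, Set.mem_iInter] at this ⊢
      exact this n
    exact isOpen_prod_iff.1 hopen a b hmem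
  choose u v hu hv hau hbv huv using key
  refine ⟨⋂ n, u n, ⋂ n, v n, ?_, ?_, ?_, ?_, ?_⟩
  · exact TopologicalSpace.isOpen_generateFrom_of_mem (IsGδ.iInter fun n => (hu n).isGδ)
  · exact TopologicalSpace.isOpen_generateFrom_of_mem (IsGδ.iInter fun n => (hv n).isGδ)
  · exact Set.mem_iInter.2 hau
  · exact Set.mem_iInter.2 hbv
  · rintro ⟨x, y⟩ ⟨hx, hy⟩
    simp only [Set.mem_iInter] at hx hy
    simp only [Set.mem_preimage, Set.mem_iInter]
    exact fun n => huv n (Set.mk_mem_prod (hx n) (hy n))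
end

section
/- Let X be a Tychonoff (completely regular T₀) space and let (G, ι) be the free Abelian paratopological group on X. For every natural number n, the set Bₙ(X) consisting of the identity together with all elements of G expressible as a sum of at most n elements of ι(X) ∪ (−ι(X)) is closed in G. -/
/-- `(G, ι)` is the (Markov) free Abelian paratopological group on the space `X`
(written additively). -/
def IsFreeAbelianParatopologicalGroup.{u, v, w} {X : Type u} [TopologicalSpace X]
    (G : Type v) [AddCommGroup G] [TopologicalSpace G] [ContinuousAdd G] (ι : X → G) : Prop :=
  Topology.IsEmbedding ι ∧ AddSubgroup.closure (Set.range ι) = ⊤ ∧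
    ∀ (H : Type w) [AddCommGroup H] [TopologicalSpace H] [ContinuousAdd H] (f : X → H),
      Continuous f → ∃ fh : G →+ H, Continuous fh ∧ ∀ x : X, fh (ι x) = f x

/-- Additive `Bₙ(X)`: the identity together with all sums of at most `n` terms, each belonging
to `ι X` or the set of negatives of elements of `ι X`. -/
def addWordBall {X : Type u} {G : Type v} [AddGroup G] (ι : X → G) (n : ℕ) : Set G :=
  {g | ∃ l : List G, l.length ≤ n ∧ (∀ a ∈ l, a ∈ Set.range ι ∨ -a ∈ Set.range ι) ∧ l.sum = g}

open TopologicalSpace in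
def AWB.upTop.{w} : TopologicalSpace (ULift.{w} ℝ) :=
  .generateFrom {s | ∃ a : ℝ, s = {x : ULift ℝ | a < x.down}}

namespace AWB

lemma upTop_isOpen.{w} (a : ℝ) : @IsOpen _ upTop.{w} {x : ULift.{w} ℝ | a < x.down} :=
  TopologicalSpace.isOpen_generateFrom_of_mem ⟨a, rfl⟩

lemma upTop_continuousAdd.{w} : @ContinuousAdd (ULift.{w} ℝ) upTop _ := by
  letI := upTop.{w}
  constructor
  refine continuous_generateFrom_iff.mpr ?_
  rintro s ⟨a, rfl⟩
  have : (fun p : ULift.{w} ℝ × ULift ℝ => p.1 + p.2) ⁻¹' {x : ULift ℝ | a < x.down}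
      = ⋃ q : ℝ, ({x : ULift.{w} ℝ | q < x.down} ×ˢ {x : ULift.{w} ℝ | a - q < x.down}) := by
    ext p
    simp only [Set.mem_preimage, Set.mem_setOf_eq, Set.mem_iUnion, Set.mem_prod]
    constructor
    · intro h
      have h' : a - p.2.down < p.1.down := by
        change a < (p.1.down + p.2.down) at h; linarith
      obtain ⟨q, hq1, hq2⟩ := exists_between h'
      exact ⟨q, hq2, by linarith⟩
    · rintro ⟨q, h1, h2⟩
      show a < p.1.down + p.2.down
      linarith
  rw [this]
  exact isOpen_iUnion fun q => IsOpen.prod (upTop_isOpen q) (upTop_isOpen (a - q))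

lemma upTop_continuous_up.{w} {α : Type*} [TopologicalSpace α] {f : α → ℝ} (hf : Continuous f) :
    @Continuous _ _ _ upTop.{w} (fun y => (⟨f y⟩ : ULift.{w} ℝ)) := by
  letI := upTop.{w}
  refine continuous_generateFrom_iff.mpr ?_
  rintro s ⟨a, rfl⟩
  exact isOpen_Ioi.preimage hf

/-- `ULift.down` as an `AddMonoidHom`. -/
def downHom.{w} : ULift.{w} ℝ →+ ℝ where
  toFun := ULift.down
  map_zero' := rfl
  map_add' _ _ := rfl

lemma sum_map_toList {α β : Type*} [AddCommMonoid β] (s : Finset α) (f : α → β) :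
    (s.toList.map f).sum = ∑ x ∈ s, f x := by
  rw [← Multiset.sum_coe, ← Multiset.map_coe, Finset.coe_toList]
  rfl

lemma sum_flatMap' {α β : Type*} [AddMonoid β] (l : List α) (f : α → List β) :
    (l.flatMap f).sum = (l.map fun x => (f x).sum).sum := by
  induction l with
  | nil => simp
  | cons a t ih => simp [ih]

lemma mul_sign (m : ℤ) : m * m.sign = |m| := by
  rcases lt_trichotomy m 0 with h|h|h
  · rw [Int.sign_eq_neg_one_of_neg h, abs_of_neg h]; ring
  · simp [h]
  · rw [Int.sign_eq_one_of_pos h, abs_of_pos h]; ring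

lemma abs_sign_le (m : ℤ) : |((m.sign : ℤ) : ℝ)| ≤ 1 := by
  rcases lt_trichotomy m 0 with h|h|h
  · rw [Int.sign_eq_neg_one_of_neg h]; norm_num
  · simp [h]
  · rw [Int.sign_eq_one_of_pos h]; norm_num

lemma exists_rep {X : Type u} {G : Type v} [AddCommGroup G] {ι : X → G}
    (hgen : AddSubgroup.closure (Set.range ι) = ⊤) (g : G) :
    ∃ c : X →₀ ℤ, c.sum (fun x m => m • ι x) = g := by
  have hg : g ∈ AddSubgroup.closure (Set.range ι) := hgen ▸ AddSubgroup.mem_top g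
  induction hg using AddSubgroup.closure_induction with
  | mem x hx =>
    obtain ⟨y, rfl⟩ := hx
    exact ⟨Finsupp.single y 1, by rw [Finsupp.sum_single_index (by simp), one_smul]⟩
  | zero => exact ⟨0, by simp⟩
  | add x y _ _ hx hy =>
    obtain ⟨c, hc⟩ := hx; obtain ⟨d, hd⟩ := hy
    refine ⟨c + d, ?_⟩
    rw [Finsupp.sum_add_index' (fun a => by simp) (fun a b₁ b₂ => add_smul b₁ b₂ (ι a)), hc, hd]
  | neg x _ hx =>
    obtain ⟨c, hc⟩ := hx
    refine ⟨-c, ?_⟩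
    rw [Finsupp.sum_neg_index (fun a => by simp)]
    rw [← hc]
    simp [Finsupp.sum, neg_smul, Finset.sum_neg_distrib]

lemma mem_ball_of_rep {X : Type u} {G : Type v} [AddCommGroup G] (ι : X → G)
    (c : X →₀ ℤ) (n : ℕ) (hn : (c.sum fun _ m => m.natAbs) ≤ n) :
    (c.sum fun x m => m • ι x) ∈ addWordBall ι n := by
  classical
  refine ⟨c.support.toList.flatMap fun x => List.replicate (c x).natAbs
    (if 0 ≤ c x then ι x else -ι x), ?_, ?_, ?_⟩
  · rw [List.length_flatMap]
    calc (c.support.toList.map fun x => (List.replicate (c x).natAbs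
          (if 0 ≤ c x then ι x else -ι x)).length).sum
        = (c.support.toList.map fun x => (c x).natAbs).sum := by
          congr 1; apply List.map_congr_left; intro x _; exact List.length_replicate
      _ = c.sum (fun _ m => m.natAbs) := sum_map_toList _ _
      _ ≤ n := hn
  · intro a ha
    rw [List.mem_flatMap] at ha
    obtain ⟨x, _, ha⟩ := ha
    rw [List.eq_of_mem_replicate ha]
    by_cases h : 0 ≤ c x
    · rw [if_pos h]; exact Or.inl ⟨x, rfl⟩
    · rw [if_neg h]; exact Or.inr ⟨x, by simp⟩
  · rw [sum_flatMap']
    calc (c.support.toList.map fun x => (List.replicate (c x).natAbs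
          (if 0 ≤ c x then ι x else -ι x)).sum).sum
        = (c.support.toList.map fun x => c x • ι x).sum := by
          congr 1; apply List.map_congr_left; intro x _
          rw [List.sum_replicate]
          by_cases h : 0 ≤ c x
          · rw [if_pos h]
            have : c x = ((c x).natAbs : ℤ) := by omega
            rw [← natCast_zsmul, ← this]
          · rw [if_neg h]
            have : c x = -((c x).natAbs : ℤ) := by omega
            rw [smul_neg, ← natCast_zsmul, ← neg_smul, ← this]
      _ = c.sum (fun x m => m • ι x) := sum_map_toList _ _

lemma exists_bump {X : Type u} [TopologicalSpace X] [T0Space X] [CompletelyRegularSpace X]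
    (S : Finset X) (σ : X → ℝ) (hσ : ∀ x, |σ x| ≤ 1) :
    ∃ F : X → ℝ, Continuous F ∧ (∀ y, |F y| ≤ 1) ∧ ∀ x ∈ S, F x = σ x := by
  classical
  haveI hT1 : T1Space X := inferInstance
  have key : ∀ x ∈ S, ∃ b : X → ℝ, Continuous b ∧ b x = 1 ∧
      (∀ z ∈ S, z ≠ x → b z = 0) ∧ ∀ y, b y ∈ Set.Icc (0:ℝ) 1 := by
    intro x hx
    have hcl : IsClosed (↑(S.erase x) : Set X) := (S.erase x).finite_toSet.isClosed
    have hxe : x ∉ (↑(S.erase x) : Set X) := by simp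
    obtain ⟨f, hf, hf0, hf1⟩ := CompletelyRegularSpace.completely_regular x _ hcl hxe
    refine ⟨fun y => 1 - (f y : ℝ), by fun_prop, ?_, ?_, ?_⟩
    · show 1 - ((f x : ℝ)) = 1
      rw [hf0]; simp
    · intro z hz hzx
      have hz1 : f z = 1 := hf1 (by simp [hz, hzx])
      show 1 - ((f z : ℝ)) = 0
      rw [hz1]; simp
    · intro y
      have h2 : (f y : ℝ) ∈ Set.Icc (0:ℝ) 1 := (f y).2
      rw [Set.mem_Icc] at h2 ⊢
      refine ⟨?_, ?_⟩
      · show (0:ℝ) ≤ 1 - (f y : ℝ); linarith [h2.2]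
      · show 1 - (f y : ℝ) ≤ 1; linarith [h2.1]
  choose b hb1 hb2 hb3 hb4 using key
  refine ⟨fun y => max (-1) (min 1 (∑ x ∈ S.attach, σ x.1 * b x.1 x.2 y)), ?_, ?_, ?_⟩
  · exact continuous_const.max (continuous_const.min
      (continuous_finset_sum _ (fun x _ => continuous_const.mul (hb1 x.1 x.2))))
  · intro y
    rw [abs_le]
    exact ⟨le_max_left _ _, max_le (by norm_num) (min_le_left _ _)⟩
  · intro x hx
    have hsum : (∑ z ∈ S.attach, σ z.1 * b z.1 z.2 x) = σ x := by
      rw [Finset.sum_eq_single (⟨x, hx⟩ : {z // z ∈ S})]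
      · rw [hb2 x hx, mul_one]
      · rintro ⟨z, hz⟩ _ hne
        rw [hb3 z hz x hx (fun h : x = z => hne (Subtype.ext h.symm)), mul_zero]
      · intro h; exact absurd (Finset.mem_attach _ _) h
    show max (-1) (min 1 (∑ z ∈ S.attach, σ z.1 * b z.1 z.2 x)) = σ x
    rw [hsum]
    have hb := hσ x
    rw [abs_le] at hb
    rw [min_eq_right hb.2, max_eq_right hb.1]

end AWB

theorem addWordBall_isClosed_aux {X : Type u} [TopologicalSpace X]
    [T0Space X] [CompletelyRegularSpace X]
    {G : Type v} [AddCommGroup G] [TopologicalSpace G] [ContinuousAdd G] {ι : X → G}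
    (hemb : Topology.IsEmbedding ι) (hgen : AddSubgroup.closure (Set.range ι) = ⊤)
    (huniv : ∀ (H : Type w) [AddCommGroup H] [TopologicalSpace H] [ContinuousAdd H] (f : X → H),
      Continuous f → ∃ fh : G →+ H, Continuous fh ∧ ∀ x : X, fh (ι x) = f x) (n : ℕ) :
    IsClosed (addWordBall ι n) := by
  classical
  refine isClosed_of_closure_subset ?_
  intro g hg
  obtain ⟨c, hc⟩ := AWB.exists_rep hgen g
  by_cases hsize : (c.sum fun _ m => m.natAbs) ≤ n
  · rw [← hc]; exact AWB.mem_ball_of_rep ι c n hsize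
  exfalso
  push_neg at hsize
  obtain ⟨F, hFc, hF1, hFS⟩ := AWB.exists_bump c.support (fun x => (((c x).sign : ℤ) : ℝ))
    (fun x => AWB.abs_sign_le (c x))
  letI tH : TopologicalSpace (ULift.{w} ℝ) := AWB.upTop
  haveI : ContinuousAdd (ULift.{w} ℝ) := AWB.upTop_continuousAdd
  obtain ⟨fh, hfhc, hfhx⟩ := huniv (ULift.{w} ℝ) (fun x => ⟨F x⟩) (AWB.upTop_continuous_up hFc)
  -- value of fh at g
  have hval : AWB.downHom (fh g) = ((c.sum fun _ m => m.natAbs : ℕ) : ℝ) := by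
    rw [← hc]
    rw [show AWB.downHom (fh (c.sum fun x m => m • ι x))
        = (AWB.downHom.comp fh) (c.sum fun x m => m • ι x) from rfl]
    rw [map_finsuppSum]
    rw [Finsupp.sum, Finsupp.sum, Nat.cast_sum]
    apply Finset.sum_congr rfl
    intro x hx
    rw [AddMonoidHom.comp_apply, map_zsmul, hfhx]
    show c x • F x = (((c x).natAbs : ℕ) : ℝ)
    rw [hFS x hx, zsmul_eq_mul, Nat.cast_natAbs]
    exact_mod_cast AWB.mul_sign (c x)
  -- the open set
  have hUopen : IsOpen (fh ⁻¹' {z : ULift.{w} ℝ | (n : ℝ) < z.down}) :=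
    (AWB.upTop_isOpen (n : ℝ)).preimage hfhc
  have hgU : g ∈ fh ⁻¹' {z : ULift.{w} ℝ | (n : ℝ) < z.down} := by
    show (n : ℝ) < (fh g).down
    have : AWB.downHom (fh g) = (fh g).down := rfl
    rw [← this, hval]
    exact_mod_cast hsize
  obtain ⟨b, hbU, hbB⟩ := mem_closure_iff.mp hg _ hUopen hgU
  obtain ⟨l, hlen, hmem, hlsum⟩ := hbB
  have hle : (fh b).down ≤ (n : ℝ) := by
    have h1 : AWB.downHom (fh b) = (l.map fun a => (fh a).down).sum := by
      rw [← hlsum, ← AddMonoidHom.comp_apply, map_list_sum (AWB.downHom.comp fh) l]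
      rfl
    have h1' : (fh b).down = (l.map fun a => (fh a).down).sum := h1
    rw [h1']
    calc (l.map fun a => (fh a).down).sum
        ≤ (l.map fun a => (fh a).down).length • (1:ℝ) := by
          apply List.sum_le_card_nsmul
          intro x hxl
          rw [List.mem_map] at hxl
          obtain ⟨a, hal, rfl⟩ := hxl
          rcases hmem a hal with ⟨y, rfl⟩ | ⟨y, hy⟩
          · rw [hfhx y]
            exact (abs_le.mp (hF1 y)).2
          · have : a = -ι y := by rw [hy, neg_neg]
            rw [this, map_neg, hfhx y]
            show -(F y) ≤ 1
            linarith [(abs_le.mp (hF1 y)).1]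
      _ ≤ (n : ℝ) := by
          rw [List.length_map, nsmul_eq_mul, mul_one]
          exact_mod_cast hlen
  exact absurd hbU (not_lt.mpr hle)


/-- In the free Abelian paratopological group on a Tychonoff space `X`, each set
`Bₙ(X)` is closed. -/
theorem addWordBall_isClosed {X : Type u} [TopologicalSpace X]
    [T0Space X] [CompletelyRegularSpace X]
    {G : Type v} [AddCommGroup G] [TopologicalSpace G] [ContinuousAdd G] {ι : X → G}
    (hfree : IsFreeAbelianParatopologicalGroup G ι) (n : ℕ) :
    IsClosed (addWordBall ι n) :=
  addWordBall_isClosed_aux hfree.1 hfree.2.1 hfree.2.2 n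
end

section
/- Let X be a set and let {Uₙ : n ∈ ℕ} be a sequence of subsets of X × X, each containing the diagonal {(x,x) : x ∈ X}, such that U_{n+1} ∘ U_{n+1} ∘ U_{n+1} ⊆ Uₙ for each n. Let k ∈ ℕ and k₁, …, k_p ∈ ℕ with Σ_{i=1}^{p} 2^{-k_i} < 2^{-k}. Then U_{k₁} ∘ U_{k₂} ∘ ⋯ ∘ U_{k_p} ⊆ U_k. -/
/-- The composition `U k₁ ∘ U k₂ ∘ ⋯ ∘ U k_p` of a finite list of relations
(the empty composition being the diagonal). -/
def relListComp {X : Type u} (U : ℕ → Set (X × X)) : List ℕ → Set (X × X)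
  | [] => {p : X × X | p.1 = p.2}
  | k :: ks => SetRel.comp (U k) (relListComp U ks)

lemma relListComp_nil {X : Type u} (U : ℕ → Set (X × X)) :
    relListComp U [] = SetRel.id := rfl

lemma relListComp_append {X : Type u} (U : ℕ → Set (X × X)) (a b : List ℕ) :
    relListComp U (a ++ b) = SetRel.comp (relListComp U a) (relListComp U b) := by
  induction a with
  | nil => simp [relListComp_nil, SetRel.id_comp]
  | cons x t ih => simp [relListComp, ih, SetRel.comp_assoc]

/-- split lemma for nonneg lists -/
lemma list_split (l : List ℝ) (hl : l ≠ []) (hpos : ∀ x ∈ l, 0 ≤ x)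
    (c : ℝ) (hc0 : 0 ≤ c) (hcs : c ≤ l.sum) :
    ∃ a x b, l = a ++ x :: b ∧ a.sum ≤ c ∧ b.sum ≤ l.sum - c := by
  induction l generalizing c with
  | nil => exact absurd rfl hl
  | cons y t ih =>
    by_cases hy : c ≤ y
    · exact ⟨[], y, t, rfl, by simpa, by simp; linarith⟩
    · push_neg at hy
      have hy0 : 0 ≤ y := hpos y (by simp)
      have ht : t ≠ [] := by
        rintro rfl
        simp at hcs; linarith
      obtain ⟨a, x, b, heq, ha, hb⟩ := ih ht (fun x hx => hpos x (by simp [hx]))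
        (c - y) (by linarith) (by simp at hcs ⊢; linarith)
      exact ⟨y :: a, x, b, by simp [heq], by simp; linarith, by simp at hb ⊢; linarith⟩

/-- If `U (n+1) ∘ U (n+1) ∘ U (n+1) ⊆ U n` for each `n` and
`Σᵢ 2^{-kᵢ} < 2^{-k}`, then `U k₁ ∘ ⋯ ∘ U k_p ⊆ U k`. -/
theorem relListComp_subset_of_sum_lt {X : Type u} (U : ℕ → Set (X × X))
    (hrefl : ∀ n, ∀ x : X, (x, x) ∈ U n)
    (hcomp : ∀ n : ℕ, SetRel.comp (SetRel.comp (U (n + 1)) (U (n + 1))) (U (n + 1)) ⊆ U n)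
    (l : List ℕ) (hl : l ≠ []) (k : ℕ)
    (hsum : (l.map fun i => ((1 : ℝ) / 2) ^ i).sum < ((1 : ℝ) / 2) ^ k) :
    relListComp U l ⊆ U k := by
  have hstep : ∀ n : ℕ, U (n+1) ⊆ U n := fun n p hp =>
    hcomp n ⟨p.1, ⟨p.1, hrefl _ _, hrefl _ _⟩, hp⟩
  have hmono : ∀ m n : ℕ, n ≤ m → U m ⊆ U n := by
    intro m n h
    induction h with
    | refl => exact subset_rfl
    | @step m' h ih => exact fun p hp => ih (hstep m' hp)
  -- strong induction on length
  have key : ∀ n : ℕ, ∀ l : List ℕ, l.length ≤ n → l ≠ [] → ∀ k : ℕ,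
      (l.map fun i => ((1 : ℝ) / 2) ^ i).sum < ((1 : ℝ) / 2) ^ k →
      relListComp U l ⊆ U k := by
    intro n
    induction n with
    | zero => intro l hlen hne; simp [List.length_eq_zero_iff] at hlen; exact absurd hlen hne
    | succ n ih =>
      intro l hlen hne k hsum
      set f : ℕ → ℝ := fun i => ((1 : ℝ) / 2) ^ i with hf
      set S : ℝ := (l.map f).sum with hS
      have hpos : ∀ x ∈ l.map f, (0:ℝ) ≤ x := by
        rintro x hx
        simp [hf] at hx
        obtain ⟨i, _, rfl⟩ := hx
        positivity
      have hS0 : 0 ≤ S := List.sum_nonneg hpos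
      obtain ⟨a, x, b, heq, ha, hb⟩ := list_split (l.map f)
        (by simpa using hne) hpos (S/2) (by linarith) (by rw [← hS]; linarith)
      -- pull back split to l
      obtain ⟨a', rest, rfl, ha', hrest⟩ := List.map_eq_append_iff.mp heq
      obtain ⟨m, b', rfl, hm, hb'⟩ := (List.map_eq_cons_iff).mp hrest
      subst ha' hb' hm
      -- value of x
      have hxS : f m ≤ S := by
        have := List.single_le_sum hpos (f m) (by rw [heq]; simp)
        simpa [hS] using this
      have hhalf : S / 2 < f k * (1/2) := by
        have : f k = ((1:ℝ)/2)^k := rfl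
        rw [this]; rw [hS] at hsum; linarith
      have hfk1 : f k * (1/2) = f (k+1) := by simp [hf, pow_succ]; ring
      -- middle: m ≥ k+1
      have hmk : U m ⊆ U (k+1) := by
        apply hmono
        have : f m < f k := lt_of_le_of_lt hxS (by rw [hS] at hsum; exact hsum)
        have h2 : ((1:ℝ)/2)^m < ((1:ℝ)/2)^k := this
        have := (pow_lt_pow_iff_right_of_lt_one₀ (by norm_num) (by norm_num : (1:ℝ)/2 < 1)).mp h2
        omega
      have hlena : a'.length ≤ n := by
        have := hlen; simp at this ⊢; omega
      have hlenb : b'.length ≤ n := by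
        have := hlen; simp at this ⊢; omega
      have hsa : (a'.map f).sum < f (k+1) := by
        rw [← hfk1]; exact lt_of_le_of_lt ha hhalf
      have hsb : (b'.map f).sum < f (k+1) := by
        rw [← hfk1]
        refine lt_of_le_of_lt hb ?_
        rw [← hS]; linarith
      have hA : relListComp U a' ⊆ U (k+1) := by
        rcases eq_or_ne a' [] with h | h
        · subst h; intro p hp
          simp [relListComp] at hp
          obtain ⟨p1, p2⟩ := p
          simp at hp; subst hp; exact hrefl _ _
        · exact ih a' hlena h (k+1) hsa
      have hB : relListComp U b' ⊆ U (k+1) := by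
        rcases eq_or_ne b' [] with h | h
        · subst h; intro p hp
          simp [relListComp] at hp
          obtain ⟨p1, p2⟩ := p
          simp at hp; subst hp; exact hrefl _ _
        · exact ih b' hlenb h (k+1) hsb
      calc relListComp U (a' ++ m :: b')
          = SetRel.comp (relListComp U a') (SetRel.comp (U m) (relListComp U b')) := by
            rw [relListComp_append]; rfl
        _ ⊆ SetRel.comp (SetRel.comp (U (k+1)) (U (k+1))) (U (k+1)) := by
            rw [SetRel.comp_assoc]
            exact SetRel.comp_subset_comp hA (SetRel.comp_subset_comp hmk hB)
        _ ⊆ U k := hcomp k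
  exact key l.length l le_rfl hl k hsum
end

section
/- Let G be a group with identity e and let {Vᵢ : i ∈ ℕ} be a sequence of subsets of G such that e ∈ Vᵢ and Vᵢ₊₁ · Vᵢ₊₁ · Vᵢ₊₁ ⊆ Vᵢ for each i ∈ ℕ. Let r ∈ ℕ and k₁, …, k_p ∈ ℕ with Σ_{i=1}^{p} 2^{-k_i} < 2^{-r}. Then V_{k₁} · V_{k₂} ⋯ V_{k_p} ⊆ V_r. -/
open Pointwise

private lemma Vmono' {G : Type*} [Group G] (V : ℕ → Set G)
    (hone : ∀ i : ℕ, (1 : G) ∈ V i)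
    (hcube : ∀ i : ℕ, V (i + 1) * V (i + 1) * V (i + 1) ⊆ V i)
    {i j : ℕ} (h : i ≤ j) : V j ⊆ V i := by
  induction j with
  | zero =>
    have : i = 0 := Nat.le_zero.mp h
    subst this; exact fun x hx => hx
  | succ n ih =>
    rcases Nat.lt_or_ge i (n + 1) with h' | h'
    · intro x hx
      have hx' : (1 : G) * 1 * x ∈ V n :=
        hcube n (Set.mul_mem_mul (Set.mul_mem_mul (hone (n + 1)) (hone (n + 1))) hx)
      exact ih (Nat.lt_succ_iff.mp h') (by simpa using hx')
    · have : i = n + 1 := le_antisymm h h'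
      subst this; exact fun x hx => hx

private lemma key' {G : Type*} [Group G] (V : ℕ → Set G)
    (hone : ∀ i : ℕ, (1 : G) ∈ V i)
    (hcube : ∀ i : ℕ, V (i + 1) * V (i + 1) * V (i + 1) ⊆ V i) :
    ∀ n : ℕ, ∀ l : List ℕ, l.length ≤ n → ∀ r : ℕ,
      (l.map fun i => ((1 : ℝ) / 2) ^ i).sum < ((1 : ℝ) / 2) ^ r →
      (l.map V).prod ⊆ V r := by
  classical
  intro n
  induction n with
  | zero =>
    intro l hl r _
    have : l = [] := List.length_eq_zero_iff.mp (Nat.le_zero.mp hl)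
    subst this
    simp only [List.map_nil, List.prod_nil]
    rw [Set.one_subset]
    exact hone r
  | succ n ih =>
    intro l hl r hsum
    rcases eq_or_ne l [] with rfl | hne
    · simp only [List.map_nil, List.prod_nil]
      rw [Set.one_subset]
      exact hone r
    set f : ℕ → ℝ := fun i => ((1 : ℝ) / 2) ^ i with hf
    have hpos : ∀ i, 0 < f i := fun i => by positivity
    set p := l.length with hp
    have hp1 : 1 ≤ p := List.length_pos_iff.mpr hne
    set P : ℕ → Prop := fun m => ((l.take m).map f).sum < ((1 : ℝ) / 2) ^ (r + 1) with hP
    have hP0 : P 0 := by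
      simp only [hP, List.take_zero, List.map_nil, List.sum_nil]
      positivity
    set m := Nat.findGreatest P (p - 1) with hm
    have hmle : m ≤ p - 1 := Nat.findGreatest_le _
    have hmlt : m < p := lt_of_le_of_lt hmle (Nat.sub_lt hp1 one_pos)
    have hPm : P m := Nat.findGreatest_spec (Nat.zero_le _) hP0
    -- decompose l
    have hdropeq : l.drop m = l[m] :: l.drop (m + 1) := List.drop_eq_getElem_cons hmlt
    have hleq : l = l.take m ++ l[m] :: l.drop (m + 1) := by
      conv_lhs => rw [← List.take_append_drop m l]
      rw [hdropeq]
    -- sum decomposition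
    have hsumeq : (l.map f).sum
        = ((l.take m).map f).sum + (f l[m] + ((l.drop (m + 1)).map f).sum) := by
      conv_lhs => rw [hleq]
      rw [List.map_append, List.sum_append, List.map_cons, List.sum_cons]
    have hhalf : ((1 : ℝ) / 2) ^ r = ((1 : ℝ) / 2) ^ (r + 1) + ((1 : ℝ) / 2) ^ (r + 1) := by
      ring
    -- the middle element
    have hbmem : f l[m] ≤ (l.map f).sum :=
      List.single_le_sum (fun x hx => by
        rcases List.mem_map.mp hx with ⟨i, _, rfl⟩
        exact (hpos i).le) _ (List.mem_map_of_mem (f := f) (List.getElem_mem hmlt))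
    have hblt : f l[m] < ((1 : ℝ) / 2) ^ r := lt_of_le_of_lt hbmem hsum
    have hbge : r + 1 ≤ l[m] := by
      by_contra hcon
      push_neg at hcon
      have : l[m] ≤ r := Nat.lt_succ_iff.mp hcon
      have h2 : ((1 : ℝ) / 2) ^ r ≤ f l[m] := by
        apply pow_le_pow_of_le_one (by norm_num) (by norm_num) this
      linarith
    have hVb : V l[m] ⊆ V (r + 1) := Vmono' V hone hcube hbge
    -- the drop part
    have hdropsum : ((l.drop (m + 1)).map f).sum < ((1 : ℝ) / 2) ^ (r + 1) := by
      rcases eq_or_lt_of_le hmle with heq | hlt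
      · have : l.drop (m + 1) = [] := by
          apply List.drop_eq_nil_of_le
          omega
        simp only [this, List.map_nil, List.sum_nil]
        positivity
      · have hnotP : ¬ P (m + 1) :=
          Nat.findGreatest_is_greatest (Nat.lt_succ_self m) (by omega)
      -- take (m+1) sum ≥ h
        have htake1 : ((1 : ℝ) / 2) ^ (r + 1) ≤ ((l.take (m + 1)).map f).sum := not_lt.mp hnotP
        have htakeeq : ((l.take (m + 1)).map f).sum = ((l.take m).map f).sum + f l[m] := by
          rw [List.take_succ, List.getElem?_eq_getElem hmlt]
          rw [Option.toList_some, List.map_append, List.sum_append]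
          simp
        have := hsum
        rw [hsumeq, hhalf] at this
        rw [htakeeq] at htake1
        linarith
    have htakesum : ((l.take m).map f).sum < ((1 : ℝ) / 2) ^ (r + 1) := hPm
    -- apply IH
    have hlen1 : (l.take m).length ≤ n := by
      rw [List.length_take]
      omega
    have hlen2 : (l.drop (m + 1)).length ≤ n := by
      rw [List.length_drop]
      omega
    have h1 : ((l.take m).map V).prod ⊆ V (r + 1) := ih _ hlen1 (r + 1) htakesum
    have h2 : ((l.drop (m + 1)).map V).prod ⊆ V (r + 1) := ih _ hlen2 (r + 1) hdropsum
    -- combine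
    have hprodeq : (l.map V).prod
        = ((l.take m).map V).prod * (V l[m] * ((l.drop (m + 1)).map V).prod) := by
      conv_lhs => rw [hleq]
      rw [List.map_append, List.prod_append, List.map_cons, List.prod_cons]
    rw [hprodeq]
    intro x hx
    rcases hx with ⟨a, ha, bc, hbc, rfl⟩
    rcases hbc with ⟨b, hb, c, hc, rfl⟩
    have : a * b * c ∈ V r :=
      hcube r (Set.mul_mem_mul (Set.mul_mem_mul (h1 ha) (hVb hb)) (h2 hc))
    simpa [mul_assoc] using this

/-- If `e ∈ Vᵢ` and `Vᵢ₊₁ · Vᵢ₊₁ · Vᵢ₊₁ ⊆ Vᵢ` for each `i`, and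
`Σᵢ 2^{-kᵢ} < 2^{-r}`, then `V k₁ · V k₂ ⋯ V k_p ⊆ V r`. -/
theorem list_prod_subset_of_sum_lt {G : Type u} [Group G] (V : ℕ → Set G)
    (hone : ∀ i : ℕ, (1 : G) ∈ V i)
    (hcube : ∀ i : ℕ, V (i + 1) * V (i + 1) * V (i + 1) ⊆ V i)
    (l : List ℕ) (hl : l ≠ []) (r : ℕ)
    (hsum : (l.map fun i => ((1 : ℝ) / 2) ^ i).sum < ((1 : ℝ) / 2) ^ r) :
    (l.map V).prod ⊆ V r := by
  exact key' V hone hcube l.length l le_rfl r hsum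
end

section
/- Let (P, ≤) be a quasi-ordered set (preorder) such that every sequence (pₙ)_{n∈ℕ} of elements of P has a lower bound in P (i.e., there exists q ∈ P with q ≤ pₙ for all n). Let P^ω denote the set of all sequences s : ℕ → P, quasi-ordered coordinatewise: s ≤ t iff s(n) ≤ t(n) for all n ∈ ℕ. Then d(P^ω, ≤) = d(P, ≤), where d denotes the minimal cardinality of a dense subset. -/
/-- A subset `E` of a quasi-ordered set is dense if every element lies above
some element of `E`. -/
def IsDenseBelow {P : Type u} (le : P → P → Prop) (E : Set P) : Prop :=
  ∀ p : P, ∃ q ∈ E, le q p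

/-- `d(P, ≤)`: the minimal cardinality of a dense subset of `P`. -/
noncomputable def densNum (P : Type u) (le : P → P → Prop) : Cardinal.{u} :=
  sInf {c : Cardinal.{u} | ∃ E : Set P, IsDenseBelow le E ∧ Cardinal.mk E = c}

/-- If every sequence in the quasi-ordered set `P` has a lower bound, then
`d(P^ω) = d(P)` for the coordinatewise quasi-order on sequences. -/
theorem densNum_pi_eq_of_countable_lower_bounds {P : Type u} [Preorder P]
    (hlb : ∀ s : ℕ → P, ∃ q : P, ∀ n : ℕ, q ≤ s n) :
    densNum (ℕ → P) (fun s t => ∀ n : ℕ, s n ≤ t n) = densNum P (· ≤ ·) := by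
  apply le_antisymm
  · -- d(P^ω) ≤ d(P): constant sequences over a dense set of P are dense in P^ω
    have hne : {c : Cardinal.{u} | ∃ E : Set P, IsDenseBelow (· ≤ ·) E ∧ Cardinal.mk E = c}.Nonempty :=
      ⟨_, Set.univ, fun p => ⟨p, trivial, le_refl p⟩, rfl⟩
    obtain ⟨E, hE, hmk⟩ := csInf_mem hne
    set D : Set (ℕ → P) := (fun e : P => fun _ : ℕ => e) '' E with hDdef
    have hD : IsDenseBelow (fun s t => ∀ n : ℕ, s n ≤ t n) D := by
      intro s
      obtain ⟨q, hq⟩ := hlb s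
      obtain ⟨e, heE, he⟩ := hE q
      exact ⟨fun _ => e, ⟨e, heE, rfl⟩, fun n => he.trans (hq n)⟩
    calc densNum (ℕ → P) (fun s t => ∀ n : ℕ, s n ≤ t n)
        ≤ Cardinal.mk D := csInf_le (OrderBot.bddBelow _) ⟨D, hD, rfl⟩
      _ ≤ Cardinal.mk E := Cardinal.mk_image_le
      _ = densNum P (· ≤ ·) := hmk
  · -- d(P) ≤ d(P^ω): lower bounds of members of a dense set of P^ω are dense in P
    have hne : {c : Cardinal.{u} | ∃ E : Set (ℕ → P),
        IsDenseBelow (fun s t => ∀ n : ℕ, s n ≤ t n) E ∧ Cardinal.mk E = c}.Nonempty :=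
      ⟨_, Set.univ, fun s => ⟨s, trivial, fun n => le_refl _⟩, rfl⟩
    obtain ⟨D, hD, hmk⟩ := csInf_mem hne
    set f : D → P := fun s => (hlb s.1).choose with hfdef
    set E : Set P := Set.range f with hEdef
    have hE : IsDenseBelow (· ≤ ·) E := by
      intro p
      obtain ⟨s, hsD, hs⟩ := hD (fun _ => p)
      refine ⟨f ⟨s, hsD⟩, ⟨⟨s, hsD⟩, rfl⟩, ?_⟩
      exact ((hlb s).choose_spec 0).trans (hs 0)
    calc densNum P (· ≤ ·)
        ≤ Cardinal.mk E := csInf_le (OrderBot.bddBelow _) ⟨E, hE, rfl⟩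
      _ ≤ Cardinal.mk D := Cardinal.mk_range_le
      _ = densNum (ℕ → P) (fun s t => ∀ n : ℕ, s n ≤ t n) := hmk
end

section
/- Let X be a Tychonoff (completely regular T₀) space that contains an infinite compact subset, and let (G, ι) be the free Abelian paratopological group on X. Then 𝔟 ≤ χ(e, G), where 𝔟 is the bounding number, i.e., the smallest cardinality of a family F ⊆ ℕ^ℕ that is unbounded with respect to eventual domination, and χ(e, G) is the minimal cardinality of a neighborhood base at the identity e of G. -/
/-- `f <* g`: eventual strict domination of functions `ℕ → ℕ`. -/
def EventuallyLT (f g : ℕ → ℕ) : Prop := ∀ᶠ n in Filter.atTop, f n < g n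

/-- The bounding number `𝔟`: the smallest cardinality of a family of functions `ℕ → ℕ`
unbounded with respect to eventual domination. -/
noncomputable def boundingNumber : Cardinal.{0} :=
  sInf {c : Cardinal.{0} | ∃ F : Set (ℕ → ℕ),
    (¬ ∃ g : ℕ → ℕ, ∀ f ∈ F, EventuallyLT f g) ∧ Cardinal.mk F = c}

/-- `χ(p, Y)`: the minimal cardinality of a neighborhood base at `p`. -/
noncomputable def charAt {Y : Type v} [TopologicalSpace Y] (p : Y) : Cardinal.{v} :=
  sInf {c : Cardinal.{v} | ∃ B : Set (Set Y),
    (∀ V ∈ B, V ∈ nhds p) ∧ (∀ U ∈ nhds p, ∃ V ∈ B, V ⊆ U) ∧ Cardinal.mk B = c}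

/-! ### Auxiliary: the reals with the upper ray topology, as a paratopological group -/

/-- The real line (lifted to universe `w`) endowed with the topology whose open sets are
generated by the rays `(a, ∞)`.  Addition is continuous but negation is not, so this is a
(commutative) paratopological group. -/
def RayReal : Type w := ULift.{w} ℝ

namespace RayReal

instance : AddCommGroup RayReal.{w} := inferInstanceAs (AddCommGroup (ULift ℝ))

/-- The underlying real number. -/
def down (x : RayReal.{w}) : ℝ := ULift.down x

/-- Build a `RayReal` from a real number. -/
def up (r : ℝ) : RayReal.{w} := ULift.up r

@[simp] lemma down_up (r : ℝ) : (up.{w} r).down = r := rfl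
@[simp] lemma down_add (x y : RayReal.{w}) : (x + y).down = x.down + y.down := rfl
@[simp] lemma down_zero : (0 : RayReal.{w}).down = 0 := rfl
@[simp] lemma down_neg (x : RayReal.{w}) : (-x).down = -x.down := rfl

/-- `down` as an additive homomorphism. -/
def downHom : RayReal.{w} →+ ℝ where
  toFun := down
  map_zero' := rfl
  map_add' _ _ := rfl

@[simp] lemma downHom_apply (x : RayReal.{w}) : downHom x = x.down := rfl

instance : TopologicalSpace RayReal.{w} :=
  TopologicalSpace.generateFrom (Set.range fun a : ℝ => {x : RayReal.{w} | a < x.down})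

lemma isOpen_gt (a : ℝ) : IsOpen {x : RayReal.{w} | a < x.down} :=
  TopologicalSpace.isOpen_generateFrom_of_mem ⟨a, rfl⟩

instance : ContinuousAdd RayReal.{w} := by
  constructor
  apply continuous_generateFrom_iff.mpr
  rintro s ⟨a, rfl⟩
  have hset : (fun p : RayReal.{w} × RayReal.{w} => p.1 + p.2) ⁻¹' {x : RayReal.{w} | a < x.down}
      = ⋃ c : ℝ, {x : RayReal.{w} | c < x.down} ×ˢ {x : RayReal.{w} | a - c < x.down} := by
    ext p
    simp only [Set.mem_preimage, Set.mem_iUnion, Set.mem_prod, Set.mem_setOf_eq, down_add]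
    constructor
    · intro h
      exact ⟨p.1.down - (p.1.down + p.2.down - a) / 2, by linarith, by linarith⟩
    · rintro ⟨c, h1, h2⟩
      linarith
  rw [hset]
  exact isOpen_iUnion fun c => (isOpen_gt c).prod (isOpen_gt _)

end RayReal

/-- If a Tychonoff space `X` contains an infinite compact subset, then
`𝔟 ≤ χ(e, AP(X))` for the free Abelian paratopological group `(G, ι)` on `X`. -/
theorem boundingNumber_le_char_freeAbelianParatopGroup {X : Type u} [TopologicalSpace X]
    [T0Space X] [CompletelyRegularSpace X]
    (hcpt : ∃ K : Set X, IsCompact K ∧ K.Infinite)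
    {G : Type v} [AddCommGroup G] [TopologicalSpace G] [ContinuousAdd G] {ι : X → G}
    (hfree : IsFreeAbelianParatopologicalGroup G ι) :
    Cardinal.lift.{v} boundingNumber ≤ Cardinal.lift.{0} (charAt (0 : G)) := by
  classical
  obtain ⟨K, hKc, hKinf⟩ := hcpt
  -- an injective sequence in K
  set e := hKinf.natEmbedding with he
  set yseq : ℕ → X := fun n => (e n : X) with hyseq
  have hyK : ∀ n, yseq n ∈ K := fun n => (e n).2
  have hyinj : Function.Injective yseq := fun a b h => e.injective (Subtype.ext h)
  -- a cluster point of the sequence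
  have hle : Filter.map yseq Filter.atTop ≤ Filter.principal K := by
    rw [Filter.le_principal_iff, Filter.mem_map]
    exact Filter.Eventually.of_forall hyK
  obtain ⟨y, -, hcl⟩ := hKc.exists_clusterPt hle
  have hfreq : ∀ s ∈ nhds y, ∃ᶠ n in Filter.atTop, yseq n ∈ s := by
    intro s hs
    exact (mapClusterPt_iff_frequently.mp hcl) s hs
  -- witnesses in every neighborhood of y, distinct from y
  have hwit : ∀ s ∈ nhds y, ∃ n, yseq n ∈ s ∧ yseq n ≠ y := by
    intro s hs
    obtain ⟨n1, -, h1⟩ := Filter.frequently_atTop.mp (hfreq s hs) 0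
    obtain ⟨n2, hn2, h2⟩ := Filter.frequently_atTop.mp (hfreq s hs) (n1 + 1)
    by_cases hy1 : yseq n1 = y
    · refine ⟨n2, h2, fun h => ?_⟩
      have : n2 = n1 := hyinj (h.trans hy1.symm)
      omega
    · exact ⟨n1, h1, hy1⟩
  have hι : Continuous ι := hfree.1.continuous
  -- from every neighborhood of 0 in G extract a function ℕ → ℕ with witnesses
  have claim : ∀ U ∈ nhds (0 : G), ∃ gU : ℕ → ℕ, ∀ m : ℕ,
      yseq (gU m) ≠ y ∧ ((m + 1) • ι (yseq (gU m)) + -((m + 1) • ι y)) ∈ U := by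
    intro U hU
    have h1 : ∀ m : ℕ, ∃ n, yseq n ≠ y ∧ ((m + 1) • ι (yseq n) + -((m + 1) • ι y)) ∈ U := by
      intro m
      have hc : Continuous fun b : X => (m + 1) • ι b + -((m + 1) • ι y) :=
        (hι.nsmul (m + 1)).add continuous_const
      have h0 : ((m + 1) • ι y + -((m + 1) • ι y)) = (0 : G) := by
        simp
      have hmem : (fun b : X => (m + 1) • ι b + -((m + 1) • ι y)) ⁻¹' U ∈ nhds y := by
        apply hc.continuousAt.preimage_mem_nhds
        simpa [h0] using hU
      obtain ⟨n, hn1, hn2⟩ := hwit _ hmem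
      exact ⟨n, hn2, hn1⟩
    choose gU hgU using h1
    exact ⟨gU, hgU⟩
  -- a base realizing the character
  have hmemS : charAt (0 : G) ∈ {c : Cardinal.{v} | ∃ B : Set (Set G),
      (∀ V ∈ B, V ∈ nhds (0 : G)) ∧ (∀ U ∈ nhds (0 : G), ∃ V ∈ B, V ⊆ U) ∧
      Cardinal.mk B = c} := by
    rw [charAt]
    exact csInf_mem ⟨_, {V | V ∈ nhds (0 : G)}, fun V hV => hV,
      fun U hU => ⟨U, hU, subset_rfl⟩, rfl⟩
  obtain ⟨B, hB1, hB2, hmkB⟩ := hmemS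
  by_contra hcon
  rw [not_le] at hcon
  -- the corresponding family of functions is small, hence bounded
  choose Gfun hGfun using fun (U : B) => claim U (hB1 U U.2)
  set F : Set (ℕ → ℕ) := Set.range Gfun with hF
  have hFlt : Cardinal.mk F < boundingNumber := by
    have h1 : Cardinal.lift.{v} (Cardinal.mk F) ≤ Cardinal.lift.{0} (Cardinal.mk B) :=
      Cardinal.mk_range_le_lift
    rw [hmkB] at h1
    exact Cardinal.lift_lt.mp (lt_of_le_of_lt h1 hcon)
  have hbdd : ∃ g : ℕ → ℕ, ∀ f ∈ F, EventuallyLT f g := by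
    by_contra hunb
    have : boundingNumber ≤ Cardinal.mk F := by
      rw [boundingNumber]
      exact csInf_le' ⟨F, hunb, rfl⟩
    exact absurd this (not_le.mpr hFlt)
  obtain ⟨g, hg⟩ := hbdd
  -- build the lower semicontinuous potential from g
  have hex : ∀ n : ℕ, ∃ j : ℕ, n < max (g j) j :=
    fun n => ⟨n + 1, lt_of_lt_of_le (Nat.lt_succ_self n) (le_max_right _ _)⟩
  set mfun : ℕ → ℕ := fun n => Nat.find (hex n) with hmfun
  set eps : ℕ → ℝ := fun n => 1 / (mfun n + 1) with heps
  have heps_pos : ∀ n, 0 < eps n := by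
    intro n
    rw [heps]
    positivity
  set φ : X → ℝ := fun x =>
    if h : x ≠ y ∧ ∃ k, yseq k = x then -eps (Classical.choose h.2) else 0 with hφ
  have hφy : φ y = 0 := by
    rw [hφ]
    simp
  have hφseq : ∀ n, yseq n ≠ y → φ (yseq n) = -eps n := by
    intro n hn
    have h : yseq n ≠ y ∧ ∃ k, yseq k = yseq n := ⟨hn, n, rfl⟩
    rw [hφ]
    dsimp only
    rw [dif_pos h]
    have : Classical.choose h.2 = n := hyinj (Classical.choose_spec h.2)
    rw [this]
  have hφle : ∀ x, φ x ≤ 0 := by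
    intro x
    rw [hφ]
    dsimp only
    split_ifs with h
    · linarith [heps_pos (Classical.choose h.2)]
    · exact le_refl 0
  -- sublevel sets are finite
  have hfin : ∀ a : ℝ, a < 0 → {x : X | φ x ≤ a}.Finite := by
    intro a ha
    set M0 : ℕ := Nat.floor ((-a)⁻¹) with hM0
    set B0 : ℕ := (Finset.range (M0 + 1)).sup (fun j => max (g j) j) with hB0
    have hsub : {x : X | φ x ≤ a} ⊆ yseq '' Set.Iio B0 := by
      intro x hx
      simp only [Set.mem_setOf_eq] at hx
      rw [hφ] at hx
      dsimp only at hx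
      split_ifs at hx with h
      · set k := Classical.choose h.2 with hk
        have hkx : yseq k = x := Classical.choose_spec h.2
        have h1 : -a ≤ eps k := by linarith
        have hm1 : (0 : ℝ) < (mfun k : ℝ) + 1 := by positivity
        have h2 : (-a) * ((mfun k : ℝ) + 1) ≤ 1 := by
          have := mul_le_mul_of_nonneg_right h1 (le_of_lt hm1)
          rw [heps] at this
          dsimp only at this
          rw [one_div_mul_cancel (ne_of_gt hm1)] at this
          exact this
        have ha' : (0 : ℝ) < -a := by linarith
        have h3 : ((mfun k : ℝ) + 1) ≤ (-a)⁻¹ := by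
          rw [le_inv_comm₀ hm1 ha']
          rw [inv_eq_one_div]
          rw [heps] at h1
          exact h1
        have h4 : mfun k + 1 ≤ M0 := by
          rw [hM0]
          apply Nat.le_floor
          push_cast
          exact h3
        have h5 : k < max (g (mfun k)) (mfun k) := Nat.find_spec (hex k)
        have h6 : max (g (mfun k)) (mfun k) ≤ B0 := by
          rw [hB0]
          exact Finset.le_sup (f := fun j => max (g j) j)
            (Finset.mem_range.mpr (Nat.lt_succ_of_le (le_trans (Nat.le_succ _) h4)))
        exact ⟨k, lt_of_lt_of_le h5 h6, hkx⟩
      · linarith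
    exact Set.Finite.subset ((Set.finite_Iio B0).image yseq) hsub
  -- the map into RayReal is continuous
  have hcontf : Continuous (fun x : X => RayReal.up (φ x)) := by
    apply continuous_generateFrom_iff.mpr
    rintro s ⟨a, rfl⟩
    have hpre : (fun x : X => RayReal.up (φ x)) ⁻¹' {z : RayReal | a < z.down}
        = {x : X | a < φ x} := rfl
    rw [hpre]
    rcases le_or_gt 0 a with ha | ha
    · have : {x : X | a < φ x} = ∅ := by
        ext x
        simp only [Set.mem_setOf_eq, Set.mem_empty_iff_false, iff_false, not_lt]
        exact le_trans (hφle x) ha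
      rw [this]
      exact isOpen_empty
    · have : {x : X | a < φ x} = {x : X | φ x ≤ a}ᶜ := by
        ext x
        simp [not_le]
      rw [this]
      exact ((hfin a ha).isClosed).isOpen_compl
  -- apply the universal property
  obtain ⟨fh, hfhc, hfhι⟩ := hfree.2.2 RayReal (fun x : X => RayReal.up (φ x)) hcontf
  set W : Set RayReal := {z : RayReal | (-1 : ℝ) < z.down} with hW
  have hWopen : IsOpen W := RayReal.isOpen_gt _
  have hN : fh ⁻¹' W ∈ nhds (0 : G) := by
    apply (hWopen.preimage hfhc).mem_nhds
    show fh 0 ∈ W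
    rw [map_zero]
    show (-1 : ℝ) < (0 : RayReal).down
    rw [RayReal.down_zero]
    norm_num
  obtain ⟨U, hUB, hUN⟩ := hB2 _ hN
  have hmemF : Gfun ⟨U, hUB⟩ ∈ F := ⟨⟨U, hUB⟩, rfl⟩
  obtain ⟨M, hM⟩ := Filter.eventually_atTop.mp (hg _ hmemF)
  have hlt : Gfun ⟨U, hUB⟩ M < g M := hM M le_rfl
  set n := Gfun ⟨U, hUB⟩ M with hn
  obtain ⟨hne, hwU⟩ := hGfun ⟨U, hUB⟩ M
  -- the witness lies in the preimage of W
  have hwN : ((M + 1) • ι (yseq n) + -((M + 1) • ι y)) ∈ fh ⁻¹' W := hUN hwU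
  have hdown : (fh ((M + 1) • ι (yseq n) + -((M + 1) • ι y))).down
      = -(((M : ℝ) + 1) * eps n) := by
    have : RayReal.downHom (fh ((M + 1) • ι (yseq n) + -((M + 1) • ι y)))
        = -(((M : ℝ) + 1) * eps n) := by
      have e1 : RayReal.downHom (RayReal.up (φ (yseq n))) = φ (yseq n) := rfl
      have e2 : RayReal.downHom (RayReal.up (φ y)) = φ y := rfl
      rw [map_add, map_neg, map_nsmul, map_nsmul, hfhι, hfhι,
        map_add, map_neg, map_nsmul, map_nsmul, e1, e2, hφseq n hne, hφy]
      push_cast [nsmul_eq_mul]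
      ring
    rw [← this]
    rfl
  have hineq : (-1 : ℝ) < -(((M : ℝ) + 1) * eps n) := by
    have := hwN
    rw [Set.mem_preimage, hW, Set.mem_setOf_eq, hdown] at this
    exact this
  -- but the construction forces this quantity to be at most -1
  have hmle : mfun n ≤ M := by
    apply Nat.find_le
    exact lt_of_lt_of_le hlt (le_max_left _ _)
  have hepsn : 1 / ((M : ℝ) + 1) ≤ eps n := by
    rw [heps]
    apply one_div_le_one_div_of_le
    · positivity
    · have : (mfun n : ℝ) ≤ (M : ℝ) := by exact_mod_cast hmle
      linarith
  have hfinal : (1 : ℝ) ≤ ((M : ℝ) + 1) * eps n := by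
    have hpos : (0 : ℝ) < (M : ℝ) + 1 := by positivity
    have := mul_le_mul_of_nonneg_left hepsn (le_of_lt hpos)
    rwa [mul_one_div_cancel (ne_of_gt hpos)] at this
  linarith
end
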